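/- Non-evenness of the squared ground state (the key step of the paper's Lemma on non-evenness): under the stated hypotheses, u(x)² > u(−x)² for every x ≥ 3; in particular the function x ↦ u(x)² is not even on (−4,−3) ∪ (3,4). -/

import Mathlib

open Filter Real Set

private lemma contdiff2 {f : ℝ → ℝ} (hf : ContDiff ℝ 2 f) :
    Differentiable ℝ f ∧ Differentiable ℝ (deriv f) := by
  have h2 : (2 : WithTop ℕ∞) = 1 + 1 := by norm_num
  rw [h2] at hf
  rcases contDiff_succ_iff_deriv.mp hf with ⟨h1, _, h3⟩
  exact ⟨h1, h3.differentiable one_ne_zero⟩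

private lemma eq_on_Ici_of_deriv_zero {f : ℝ → ℝ} (hf : Differentiable ℝ f) {d : ℝ}
    (h : ∀ x, d ≤ x → deriv f x = 0) : ∀ x, d ≤ x → f x = f d := by
  intro x hx
  have hmono : MonotoneOn f (Icc d x) :=
    monotoneOn_of_deriv_nonneg (convex_Icc d x) hf.continuous.continuousOn
      hf.differentiableOn (fun y hy => by
        rw [interior_Icc] at hy; rw [h y hy.1.le])
  have hanti : AntitoneOn f (Icc d x) :=
    antitoneOn_of_deriv_nonpos (convex_Icc d x) hf.continuous.continuousOn
      hf.differentiableOn (fun y hy => by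
        rw [interior_Icc] at hy; rw [h y hy.1.le])
  have h1 := hmono (left_mem_Icc.mpr hx) (right_mem_Icc.mpr hx) hx
  have h2 := hanti (left_mem_Icc.mpr hx) (right_mem_Icc.mpr hx) hx
  linarith

private lemma strict_drop {f : ℝ → ℝ} {a b x₀ : ℝ} (hx₀ : x₀ ∈ Set.Ioo a b)
    (hf : Differentiable ℝ f) (hd : ∀ x ∈ Set.Ioo a b, deriv f x ≤ 0)
    (hs : deriv f x₀ < 0) : f b < f a := by
  have hab : a ≤ b := le_of_lt (lt_trans hx₀.1 hx₀.2)
  have hanti : AntitoneOn f (Icc a b) :=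
    antitoneOn_of_deriv_nonpos (convex_Icc a b) hf.continuous.continuousOn
      hf.differentiableOn (fun y hy => hd y (by rwa [interior_Icc] at hy))
  rcases lt_or_eq_of_le (hanti (left_mem_Icc.mpr hab) (right_mem_Icc.mpr hab) hab) with h | h
  · exact h
  · exfalso
    have hconst : ∀ y ∈ Set.Ioo a b, f y = f a := by
      intro y hy
      have h1 := hanti (left_mem_Icc.mpr hab) (Ioo_subset_Icc_self hy) hy.1.le
      have h2 := hanti (Ioo_subset_Icc_self hy) (right_mem_Icc.mpr hab) hy.2.le
      linarith
    have hev : f =ᶠ[nhds x₀] (fun _ => f a) :=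
      Filter.eventuallyEq_of_mem (Ioo_mem_nhds hx₀.1 hx₀.2) hconst
    have := hev.deriv_eq
    rw [deriv_const] at this
    rw [this] at hs; exact lt_irrefl 0 hs

private lemma decay_deriv {f : ℝ → ℝ} (hf : Differentiable ℝ f)
    (hf' : Differentiable ℝ (deriv f))
    (hconv : ∀ x, (3:ℝ) ≤ x → 0 < deriv (deriv f) x) (hpos : ∀ x, 0 < f x)
    (hlim : Tendsto f atTop (nhds 0)) :
    Tendsto (deriv f) atTop (nhds 0) := by
  have hsm : StrictMonoOn (deriv f) (Ici (3:ℝ)) :=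
    strictMonoOn_of_deriv_pos (convex_Ici 3) hf'.continuous.continuousOn
      (fun y hy => hconv y (le_of_lt (by rwa [interior_Ici] at hy)))
  have hneg : ∀ x, (3:ℝ) ≤ x → deriv f x < 0 := by
    intro a ha
    by_contra hge
    push_neg at hge
    have hmono : MonotoneOn f (Ici a) :=
      monotoneOn_of_deriv_nonneg (convex_Ici a) hf.continuous.continuousOn
        hf.differentiableOn (fun y hy => by
          rw [interior_Ici] at hy
          have := hsm (mem_Ici.mpr ha) (mem_Ici.mpr (le_trans ha hy.le)) hy
          linarith)
    obtain ⟨x, hx1, hx2⟩ :=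
      ((hlim.eventually_lt_const (hpos a)).and (eventually_ge_atTop a)).exists
    have := hmono (mem_Ici.mpr le_rfl) (mem_Ici.mpr hx2) hx2
    linarith
  have hlow : ∀ x, (4:ℝ) ≤ x → -(f (x - 1)) ≤ deriv f x := by
    intro x hx
    obtain ⟨c, hc, hceq⟩ := exists_deriv_eq_slope f (by linarith : x - 1 < x)
      hf.continuous.continuousOn (fun y _ => (hf y).differentiableWithinAt)
    have h1 : deriv f c < deriv f x :=
      hsm (mem_Ici.mpr (by linarith [hc.1])) (mem_Ici.mpr (by linarith)) hc.2
    have h2 : deriv f c = f x - f (x - 1) := by rw [hceq]; ring_nf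
    have := hpos x
    linarith
  have hg : Tendsto (fun x : ℝ => -(f (x - 1))) atTop (nhds 0) := by
    have h1 : Tendsto (fun x : ℝ => x - 1) atTop atTop := by
      simpa [sub_eq_add_neg] using tendsto_atTop_add_const_right atTop (-1 : ℝ) tendsto_id
    have := (hlim.comp h1).neg
    simpa using this
  refine tendsto_of_tendsto_of_tendsto_of_le_of_le' hg tendsto_const_nhds ?_ ?_
  · filter_upwards [eventually_ge_atTop (4:ℝ)] with x hx using hlow x hx
  · filter_upwards [eventually_ge_atTop (3:ℝ)] with x hx using (hneg x hx).le

private lemma eventually_pos_right {f : ℝ → ℝ} {a : ℝ} (hf : DifferentiableAt ℝ f a)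
    (h0 : f a = 0) (hd : 0 < deriv f a) : ∀ᶠ x in nhdsWithin a (Set.Ioi a), 0 < f x := by
  have hs : Tendsto (slope f a) (nhdsWithin a (Set.Ioi a)) (nhds (deriv f a)) :=
    (hasDerivAt_iff_tendsto_slope.mp hf.hasDerivAt).mono_left
      (nhdsWithin_mono a (fun y hy => ne_of_gt hy))
  have h1 : ∀ᶠ x in nhdsWithin a (Set.Ioi a), 0 < slope f a x :=
    hs.eventually (eventually_gt_nhds hd)
  filter_upwards [h1, self_mem_nhdsWithin] with x hx hmem
  rw [slope_def_field, h0, sub_zero] at hx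
  have hxa : 0 < x - a := sub_pos.mpr hmem
  have := mul_pos hx hxa
  rwa [div_mul_cancel₀] at this
  exact ne_of_gt hxa

private lemma eventually_neg_right {f : ℝ → ℝ} {a : ℝ} (hf : DifferentiableAt ℝ f a)
    (h0 : f a = 0) (hd : deriv f a < 0) : ∀ᶠ x in nhdsWithin a (Set.Ioi a), f x < 0 := by
  have := eventually_pos_right (f := fun y => -f y) hf.neg (by simp [h0])
    (by rw [deriv.fun_neg]; linarith)
  filter_upwards [this] with x hx
  simpa using hx

private lemma hasDerivAt_wronskian {f g : ℝ → ℝ} (hf : Differentiable ℝ f)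
    (hf' : Differentiable ℝ (deriv f)) (hg : Differentiable ℝ g)
    (hg' : Differentiable ℝ (deriv g)) (x : ℝ) :
    HasDerivAt (fun y => f y * deriv g y - deriv f y * g y)
      (f x * deriv (deriv g) x - deriv (deriv f) x * g x) x := by
  have h := (((hf x).hasDerivAt.fun_mul (hg' x).hasDerivAt)).fun_sub
    ((hf' x).hasDerivAt.fun_mul (hg x).hasDerivAt)
  exact h.congr_deriv (by ring)

private lemma hasDerivAt_comp_neg {f : ℝ → ℝ} {x : ℝ} (hf : DifferentiableAt ℝ f (-x)) :
    HasDerivAt (fun y => f (-y)) (-(deriv f (-x))) x := by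
  have h := hf.hasDerivAt.comp x (hasDerivAt_neg x)
  simpa [Function.comp_def] using h

private lemma vanish_of_double_zero {f : ℝ → ℝ} {lam z : ℝ} (hlam0 : 0 < lam)
    (hf : Differentiable ℝ f) (hf' : Differentiable ℝ (deriv f))
    (heq : ∀ x, deriv (deriv f) x = (x ^ 2 - lam) * f x)
    (hz : f z = 0) (hz' : deriv f z = 0) :
    ∀ x ∈ Set.Icc (z - 1/2) z, f x = 0 := by
  set C : ℝ := 1 + (|z| + 1) ^ 2 + lam with hC
  have hCpos : 0 < C := by positivity
  set φ : ℝ → ℝ := fun x => f x * f x + deriv f x * deriv f x with hφ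
  have hφd : ∀ x, HasDerivAt φ (2 * f x * deriv f x * (1 + x ^ 2 - lam)) x := by
    intro x
    have h := (((hf x).hasDerivAt.fun_mul (hf x).hasDerivAt)).fun_add
      (((hf' x).hasDerivAt.fun_mul (hf' x).hasDerivAt))
    rw [show deriv (deriv f) x = (x ^ 2 - lam) * f x from heq x] at h
    exact h.congr_deriv (by ring)
  have hφdiff : Differentiable ℝ φ := fun x => (hφd x).differentiableAt
  have hbound : ∀ x ∈ Set.Icc (z - 1/2) z, 0 ≤ deriv φ x + C * φ x := by
    intro x hx
    rw [(hφd x).deriv]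
    show 0 ≤ 2 * f x * deriv f x * (1 + x ^ 2 - lam) +
      C * (f x * f x + deriv f x * deriv f x)
    have hxabs : |x| ≤ |z| + 1 := by
      rw [abs_le]
      constructor <;> [linarith [hx.1, neg_abs_le z]; linarith [hx.2, le_abs_self z]]
    have hx2 : x ^ 2 ≤ (|z| + 1) ^ 2 := by nlinarith [sq_abs x, abs_nonneg x]
    have hA1 : 1 + x ^ 2 - lam ≤ C := by nlinarith
    have hA2 : -C ≤ 1 + x ^ 2 - lam := by nlinarith [sq_nonneg x]
    nlinarith [mul_nonneg (by linarith : (0:ℝ) ≤ C + (1 + x ^ 2 - lam)) (sq_nonneg (f x + deriv f x)),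
      mul_nonneg (by linarith : (0:ℝ) ≤ C - (1 + x ^ 2 - lam)) (sq_nonneg (f x - deriv f x))]
  set h : ℝ → ℝ := fun x => φ x * Real.exp (C * x) with hh
  have hhd : ∀ x, HasDerivAt h ((deriv φ x + C * φ x) * Real.exp (C * x)) x := by
    intro x
    have hlin : HasDerivAt (fun y : ℝ => C * y) C x := by
      simpa using (hasDerivAt_id x).const_mul C
    have := ((hφdiff x).hasDerivAt.fun_mul hlin.exp)
    exact this.congr_deriv (by ring)
  have hmono : MonotoneOn h (Set.Icc (z - 1/2) z) := by
    apply monotoneOn_of_deriv_nonneg (convex_Icc _ _)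
      (fun x _ => ((hhd x).differentiableAt.continuousAt.continuousWithinAt))
      (fun x _ => (hhd x).differentiableAt.differentiableWithinAt)
    intro x hx
    rw [interior_Icc] at hx
    rw [(hhd x).deriv]
    exact mul_nonneg (hbound x (Ioo_subset_Icc_self hx)) (Real.exp_nonneg _)
  intro x hx
  have h1 : h x ≤ h z := hmono hx (right_mem_Icc.mpr (by linarith [hx.1, hx.2])) hx.2
  have hz0 : h z = 0 := by simp [hh, hφ, hz, hz']
  have h1' : φ x * Real.exp (C * x) ≤ 0 := by rw [hz0] at h1; exact h1
  have hφx : 0 ≤ φ x := by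
    show 0 ≤ f x * f x + deriv f x * deriv f x
    nlinarith [sq_nonneg (f x), sq_nonneg (deriv f x)]
  have hexp : 0 < Real.exp (C * x) := Real.exp_pos _
  have hφ0 : φ x = 0 := by
    rcases lt_or_eq_of_le hφx with hlt | heq2
    · exfalso; nlinarith [mul_pos hlt hexp]
    · exact heq2.symm
  have : f x * f x + deriv f x * deriv f x = 0 := hφ0
  nlinarith [sq_nonneg (f x), sq_nonneg (deriv f x), mul_self_nonneg (f x), mul_self_nonneg (deriv f x)]

private lemma no_return_small {f : ℝ → ℝ} {lam z : ℝ} (hlam2 : lam < 2)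
    (hf : Differentiable ℝ f) (hf' : Differentiable ℝ (deriv f))
    (heq : ∀ x, deriv (deriv f) x = (x ^ 2 - lam) * f x)
    (h0 : f 0 = 0) (hzpos : 0 < z) (hzle : z ≤ Real.sqrt 2)
    (hneg : ∀ x ∈ Set.Ioo (0:ℝ) z, f x < 0) (hz : f z = 0) (hz' : 0 ≤ deriv f z) :
    False := by
  have hs2 : Real.sqrt 2 * Real.sqrt 2 = 2 := Real.mul_self_sqrt (by norm_num)
  have hs2pos : 0 < Real.sqrt 2 := Real.sqrt_pos.mpr (by norm_num)
  have hs2lt : Real.sqrt 2 < 2 := by nlinarith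
  set ω : ℝ → ℝ := fun x =>
    f x * (Real.sqrt 2 * Real.cos (Real.sqrt 2 * x)) - deriv f x * Real.sin (Real.sqrt 2 * x)
    with hω
  have hlin : ∀ x : ℝ, HasDerivAt (fun y : ℝ => Real.sqrt 2 * y) (Real.sqrt 2) x := by
    intro x; simpa using (hasDerivAt_id x).const_mul (Real.sqrt 2)
  have hωd : ∀ x, HasDerivAt ω (-(2 + x ^ 2 - lam) * (f x * Real.sin (Real.sqrt 2 * x))) x := by
    intro x
    have h := (((hf x).hasDerivAt.fun_mul (((hlin x).cos).const_mul (Real.sqrt 2)))).fun_sub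
      (((hf' x).hasDerivAt.fun_mul ((hlin x).sin)))
    rw [heq x] at h
    exact h.congr_deriv (by linear_combination -(f x * Real.sin (Real.sqrt 2 * x)) * hs2)
  have hsin_pos : ∀ x : ℝ, 0 < x → x ≤ Real.sqrt 2 → 0 < Real.sin (Real.sqrt 2 * x) := by
    intro x hx1 hx2
    apply Real.sin_pos_of_pos_of_lt_pi (by positivity)
    have : Real.sqrt 2 * x ≤ 2 := by nlinarith
    linarith [Real.pi_gt_three]
  have hsm : StrictMonoOn ω (Set.Icc 0 z) := by
    apply strictMonoOn_of_deriv_pos (convex_Icc _ _)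
      (fun x _ => ((hωd x).differentiableAt.continuousAt.continuousWithinAt))
    intro x hx
    rw [interior_Icc] at hx
    rw [(hωd x).deriv]
    have h1 : f x < 0 := hneg x hx
    have h2 : 0 < Real.sin (Real.sqrt 2 * x) := hsin_pos x hx.1 (le_trans hx.2.le hzle)
    have h3 : f x * Real.sin (Real.sqrt 2 * x) < 0 := mul_neg_of_neg_of_pos h1 h2
    have h4 : (0:ℝ) < 2 + x ^ 2 - lam := by nlinarith [sq_nonneg x]
    exact mul_pos_of_neg_of_neg (by linarith) h3
  have hω0 : ω 0 = 0 := by simp [hω, h0]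
  have hωz : ω z ≤ 0 := by
    have h2 : 0 < Real.sin (Real.sqrt 2 * z) := hsin_pos z hzpos hzle
    show f z * (Real.sqrt 2 * Real.cos (Real.sqrt 2 * z)) -
      deriv f z * Real.sin (Real.sqrt 2 * z) ≤ 0
    rw [hz]
    nlinarith
  have := hsm (left_mem_Icc.mpr hzpos.le) (right_mem_Icc.mpr hzpos.le) hzpos
  rw [hω0] at this
  linarith

private lemma no_pos_crossing {f : ℝ → ℝ} {lam z : ℝ} (hlam2 : lam < 2)
    (hf : Differentiable ℝ f) (hf' : Differentiable ℝ (deriv f))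
    (heq : ∀ x, deriv (deriv f) x = (x ^ 2 - lam) * f x)
    (hz2 : Real.sqrt 2 < z) (hz : f z = 0) (hz' : 0 < deriv f z)
    (hbot : ∃ y, z < y ∧ f y ≤ 0) : False := by
  classical
  set T := {x : ℝ | z < x ∧ f x ≤ 0} with hT
  have hTne : T.Nonempty := hbot
  have hTbdd : BddBelow T := ⟨z, fun x hx => hx.1.le⟩
  set s := sInf T with hs
  have hsc : s ∈ closure T := csInf_mem_closure hTne hTbdd
  have hs_mem : z ≤ s ∧ f s ≤ 0 := by
    have hclosed : IsClosed {x : ℝ | z ≤ x ∧ f x ≤ 0} := by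
      apply IsClosed.inter isClosed_Ici (isClosed_le hf.continuous continuous_const)
    have hsub : closure T ⊆ {x : ℝ | z ≤ x ∧ f x ≤ 0} :=
      closure_minimal (fun x hx => ⟨hx.1.le, hx.2⟩) hclosed
    exact hsub hsc
  have hev : ∀ᶠ x in nhdsWithin z (Set.Ioi z), 0 < f x := by
    have hslope : Tendsto (slope f z) (nhdsWithin z (Set.Ioi z)) (nhds (deriv f z)) :=
      (hasDerivAt_iff_tendsto_slope.mp (hf z).hasDerivAt).mono_left
        (nhdsWithin_mono z (fun y hy => ne_of_gt hy))
    have h1 : ∀ᶠ x in nhdsWithin z (Set.Ioi z), 0 < slope f z x :=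
      hslope.eventually (eventually_gt_nhds hz')
    filter_upwards [h1, self_mem_nhdsWithin] with x hx hmem
    rw [slope_def_field, hz, sub_zero] at hx
    have hxa : 0 < x - z := sub_pos.mpr hmem
    have := mul_pos hx hxa
    rwa [div_mul_cancel₀ _ (ne_of_gt hxa)] at this
  have hzs : z < s := by
    rcases lt_or_eq_of_le hs_mem.1 with h | h
    · exact h
    · exfalso
      obtain ⟨ε, hε, hsub⟩ := mem_nhdsGT_iff_exists_Ioc_subset.mp hev
      obtain ⟨y, hyT, hy⟩ := exists_lt_of_csInf_lt hTne
        (show s < ε by rw [← h]; exact hε)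
      have : 0 < f y := hsub ⟨hyT.1, hy.le⟩
      linarith [hyT.2]
  have hposmid : ∀ x ∈ Set.Ioo z s, 0 < f x := by
    intro x hx
    by_contra hle
    push_neg at hle
    have : x ∈ T := ⟨hx.1, hle⟩
    have := csInf_le hTbdd this
    linarith [hx.2]
  have hmono' : MonotoneOn (deriv f) (Set.Icc z s) := by
    apply monotoneOn_of_deriv_nonneg (convex_Icc _ _)
      hf'.continuous.continuousOn hf'.differentiableOn
    intro x hx
    rw [interior_Icc] at hx
    rw [heq x]
    have h1 : 0 < f x := hposmid x hx
    have h2 : Real.sqrt 2 < x := lt_trans hz2 hx.1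
    have hs2 : Real.sqrt 2 * Real.sqrt 2 = 2 := Real.mul_self_sqrt (by norm_num)
    have h3 : 2 < x ^ 2 := by nlinarith [Real.sqrt_nonneg 2]
    nlinarith
  have hsm : StrictMonoOn f (Set.Icc z s) := by
    apply strictMonoOn_of_deriv_pos (convex_Icc _ _) hf.continuous.continuousOn
    intro x hx
    rw [interior_Icc] at hx
    have := hmono' (left_mem_Icc.mpr hzs.le) ⟨hx.1.le, hx.2.le⟩ hx.1.le
    linarith
  have := hsm (left_mem_Icc.mpr hzs.le) (right_mem_Icc.mpr hzs.le) hzs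
  rw [hz] at this
  linarith [hs_mem.2]

set_option maxHeartbeats 2000000 in
/-- Non-evenness of the squared ground state: `u(x)² > u(-x)²` for `x ≥ 3`; in
particular `u²` is not even on `(-4,-3) ∪ (3,4)`. -/
theorem ground_state_squared_not_even
    (α : ℝ → ℝ) (hαc : Continuous α) (hαnonneg : ∀ x, 0 ≤ α x)
    (hαsupp : ∀ x, x ∉ Set.Ioo (-3 : ℝ) (-2) → α x = 0)
    (x₀ : ℝ) (hαpos : 0 < α x₀)
    (t : ℝ) (ht : 0 < t)
    (lam : ℝ) (hlam1 : 1 < lam) (hlam2 : lam < 2)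
    (u : ℝ → ℝ) (hu : ContDiff ℝ 2 u) (hupos : ∀ x, 0 < u x)
    (hueq : ∀ x, -deriv (deriv u) x + (x ^ 2 + t * α x) * u x = lam * u x)
    (hulim : Tendsto u (cocompact ℝ) (nhds 0))
    (W : ℝ → ℝ) (hW : ContDiff ℝ 2 W)
    (hWeq : ∀ x, deriv (deriv W) x = (x ^ 2 - lam) * W x)
    (hWu : ∀ x ≤ (-3 : ℝ), W x = u x)
    (hWpos : ∀ x ≤ (3 : ℝ), 0 < W x)
    (hWtop : Tendsto W atTop atBot) :
    (∀ x ≥ (3 : ℝ), (u (-x)) ^ 2 < (u x) ^ 2) ∧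
      ¬(∀ x ∈ Set.Ioo (-4 : ℝ) (-3) ∪ Set.Ioo (3 : ℝ) 4, (u x) ^ 2 = (u (-x)) ^ 2) := by
  obtain ⟨hud, hud'⟩ := contdiff2 hu
  obtain ⟨hWd, hWd'⟩ := contdiff2 hW
  have hu'' : ∀ x, deriv (deriv u) x = (x ^ 2 + t * α x - lam) * u x := by
    intro x; linear_combination -hueq x
  have hx₀ : x₀ ∈ Set.Ioo (-3:ℝ) (-2) := by
    by_contra h
    rw [hαsupp x₀ h] at hαpos
    exact lt_irrefl 0 hαpos
  have hut : Tendsto u atTop (nhds 0) := by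
    refine hulim.mono_left ?_
    rw [cocompact_eq_atBot_atTop]; exact le_sup_right
  have hub : Tendsto u atBot (nhds 0) := by
    refine hulim.mono_left ?_
    rw [cocompact_eq_atBot_atTop]; exact le_sup_left
  have hαout : ∀ x : ℝ, -2 ≤ x → α x = 0 := fun x hx => hαsupp x (fun hmem => by
    have := hmem.2; linarith)
  have hαout' : ∀ x : ℝ, x ≤ -3 → α x = 0 := fun x hx => hαsupp x (fun hmem => by
    have := hmem.1; linarith)
  -- deriv u tends to 0 at +∞
  have huT : Tendsto (deriv u) atTop (nhds 0) := by
    apply decay_deriv hud hud' _ hupos hut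
    intro x hx
    rw [hu'' x, hαout x (by linarith)]
    have h1 : 0 < x ^ 2 + t * 0 - lam := by nlinarith
    nlinarith [hupos x]
  -- v = u ∘ neg facts
  have hvd1 : ∀ x : ℝ, HasDerivAt (fun y => u (-y)) (-(deriv u (-x))) x :=
    fun x => hasDerivAt_comp_neg (hud _)
  have hvd : deriv (fun y => u (-y)) = fun x => -(deriv u (-x)) :=
    funext fun x => (hvd1 x).deriv
  have hvd2 : ∀ x : ℝ, HasDerivAt (deriv (fun y => u (-y))) (deriv (deriv u) (-x)) x := by
    intro x
    rw [hvd]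
    have := (hasDerivAt_comp_neg (f := deriv u) (x := x) (hud' _)).fun_neg
    simpa using this
  have hvdiff : Differentiable ℝ (fun y => u (-y)) := fun x => (hvd1 x).differentiableAt
  have hvdiff' : Differentiable ℝ (deriv (fun y => u (-y))) := fun x => (hvd2 x).differentiableAt
  have huB : Tendsto (deriv u) atBot (nhds 0) := by
    have hvconv : ∀ x : ℝ, (3:ℝ) ≤ x → 0 < deriv (deriv (fun y => u (-y))) x := by
      intro x hx
      rw [(hvd2 x).deriv, hu'' (-x), hαout' (-x) (by linarith)]
      have h1 : 0 < (-x) ^ 2 + t * 0 - lam := by nlinarith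
      nlinarith [hupos (-x)]
    have hvlim : Tendsto (fun y : ℝ => u (-y)) atTop (nhds 0) :=
      hub.comp tendsto_neg_atTop_atBot
    have hvT : Tendsto (deriv (fun y => u (-y))) atTop (nhds 0) :=
      decay_deriv hvdiff hvdiff' hvconv (fun x => hupos _) hvlim
    have h2 : Tendsto (fun x : ℝ => -(deriv u (-x))) atTop (nhds 0) := by rwa [hvd] at hvT
    have h3 : Tendsto (fun x : ℝ => deriv u (-x)) atTop (nhds 0) := by simpa using h2.neg
    have h4 := h3.comp tendsto_neg_atBot_atTop
    exact h4.congr (fun x => by simp [Function.comp])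
  -- Z = W ∘ neg
  set Z : ℝ → ℝ := fun x => W (-x) with hZdef
  have hZd1 : ∀ x : ℝ, HasDerivAt Z (-(deriv W (-x))) x := fun x => hasDerivAt_comp_neg (hWd _)
  have hZd : deriv Z = fun x => -(deriv W (-x)) := funext fun x => (hZd1 x).deriv
  have hZd2 : ∀ x : ℝ, HasDerivAt (deriv Z) (deriv (deriv W) (-x)) x := by
    intro x
    rw [hZd]
    have := (hasDerivAt_comp_neg (f := deriv W) (x := x) (hWd' _)).fun_neg
    simpa using this
  have hZdiff : Differentiable ℝ Z := fun x => (hZd1 x).differentiableAt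
  have hZdiff' : Differentiable ℝ (deriv Z) := fun x => (hZd2 x).differentiableAt
  have hZ'' : ∀ x, deriv (deriv Z) x = (x ^ 2 - lam) * Z x := by
    intro x
    rw [(hZd2 x).deriv, hWeq (-x)]
    simp only [hZdef]
    ring
  have hZu : ∀ x : ℝ, (3:ℝ) ≤ x → Z x = u (-x) := fun x hx => hWu (-x) (by linarith)
  have hZlim : Tendsto Z atTop (nhds 0) := by
    have hev : Z =ᶠ[atTop] fun x => u (-x) := by
      filter_upwards [eventually_ge_atTop (3:ℝ)] with x hx using hZu x hx
    exact Tendsto.congr' hev.symm (hub.comp tendsto_neg_atTop_atBot)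
  have hZderiv_u : ∀ x : ℝ, (3:ℝ) < x → deriv W (-x) = deriv u (-x) := by
    intro x hx
    have hmem : Set.Iio (-3:ℝ) ∈ nhds (-x) := Iio_mem_nhds (by linarith)
    have hev : W =ᶠ[nhds (-x)] u :=
      Filter.eventuallyEq_of_mem hmem (fun y hy => hWu y (le_of_lt hy))
    exact hev.deriv_eq
  -- Wronskians
  set p : ℝ → ℝ := fun x => u x * deriv Z x - deriv u x * Z x with hpdef
  have hp : ∀ x, HasDerivAt p (-(t * α x * u x * Z x)) x := by
    intro x
    have h := hasDerivAt_wronskian hud hud' hZdiff hZdiff' x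
    rw [hZ'' x, hu'' x] at h
    have h2 : HasDerivAt p (u x * ((x ^ 2 - lam) * Z x) - (x ^ 2 + t * α x - lam) * u x * Z x) x := h
    convert h2 using 1; ring
  have hpdiff : Differentiable ℝ p := fun x => (hp x).differentiableAt
  set w : ℝ → ℝ := fun x => u x * deriv W x - deriv u x * W x with hwdef
  have hw : ∀ x, HasDerivAt w (-(t * α x * u x * W x)) x := by
    intro x
    have h := hasDerivAt_wronskian hud hud' hWd hWd' x
    rw [hWeq x, hu'' x] at h
    have h2 : HasDerivAt w (u x * ((x ^ 2 - lam) * W x) - (x ^ 2 + t * α x - lam) * u x * W x) x := h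
    convert h2 using 1; ring
  have hwdiff : Differentiable ℝ w := fun x => (hw x).differentiableAt
  set mf : ℝ → ℝ := fun x => W x * deriv Z x - deriv W x * Z x with hmdef
  have hm : ∀ x, HasDerivAt mf 0 x := by
    intro x
    have h := hasDerivAt_wronskian hWd hWd' hZdiff hZdiff' x
    rw [hZ'' x, hWeq x] at h
    have h2 : HasDerivAt mf (W x * ((x ^ 2 - lam) * Z x) - (x ^ 2 - lam) * W x * Z x) x := h
    convert h2 using 1; ring
  have hmconst : ∀ x y : ℝ, mf x = mf y :=
    fun x y => is_const_of_deriv_eq_zero (fun z => (hm z).differentiableAt)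
      (fun z => (hm z).deriv) x y
  -- boundary equalities at -3
  have h3 : W (-3:ℝ) = u (-3) := hWu _ le_rfl
  have hd3 : deriv W (-3:ℝ) = deriv u (-3) := by
    have e1 : derivWithin W (Set.Iic (-3:ℝ)) (-3) = derivWithin u (Set.Iic (-3:ℝ)) (-3) :=
      derivWithin_congr (fun y hy => hWu y hy) h3
    have e2 : derivWithin W (Set.Iic (-3:ℝ)) (-3) = deriv W (-3) :=
      (hWd _).derivWithin (uniqueDiffOn_Iic (-3) _ Set.self_mem_Iic)
    have e3 : derivWithin u (Set.Iic (-3:ℝ)) (-3) = deriv u (-3) :=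
      (hud _).derivWithin (uniqueDiffOn_Iic (-3) _ Set.self_mem_Iic)
    rw [← e2, e1, e3]
  -- p constant on [-2,∞), equal to 0
  have hpconst : ∀ x : ℝ, -2 ≤ x → p x = p (-2) := by
    apply eq_on_Ici_of_deriv_zero hpdiff
    intro x hx
    rw [(hp x).deriv, hαout x hx]; ring
  have hp20 : p (-2:ℝ) = 0 := by
    have hplim : Tendsto p atTop (nhds 0) := by
      have hev : p =ᶠ[atTop] fun x => u x * (-(deriv u (-x))) - deriv u x * u (-x) := by
        filter_upwards [eventually_gt_atTop (3:ℝ)] with x hx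
        simp only [hpdef, hZd]
        rw [hZderiv_u x hx, hZu x hx.le]
      have hlim2 : Tendsto (fun x => u x * (-(deriv u (-x))) - deriv u x * u (-x))
          atTop (nhds 0) := by
        have l1 : Tendsto (fun x : ℝ => u (-x)) atTop (nhds 0) :=
          hub.comp tendsto_neg_atTop_atBot
        have l2 : Tendsto (fun x : ℝ => deriv u (-x)) atTop (nhds 0) :=
          huB.comp tendsto_neg_atTop_atBot
        have := (hut.mul l2.neg).sub (huT.mul l1)
        simpa using this
      exact Tendsto.congr' hev.symm hlim2
    have hconstlim : Tendsto p atTop (nhds (p (-2))) := by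
      have hev : p =ᶠ[atTop] fun _ => p (-2) := by
        filter_upwards [eventually_ge_atTop (-2:ℝ)] with x hx using hpconst x hx
      exact Tendsto.congr' hev.symm tendsto_const_nhds
    exact tendsto_nhds_unique hconstlim hplim
  -- w constant on [-2,∞)
  have hwconst : ∀ x : ℝ, -2 ≤ x → w x = w (-2) := by
    apply eq_on_Ici_of_deriv_zero hwdiff
    intro x hx
    rw [(hw x).deriv, hαout x hx]; ring
  have hw3 : w (-3:ℝ) = 0 := by
    simp only [hwdef]
    rw [h3, hd3]; ring
  have hwneg : w (-2:ℝ) < 0 := by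
    have hdrop : w (-2:ℝ) < w (-3:ℝ) := by
      apply strict_drop hx₀ hwdiff
      · intro x hx
        rw [(hw x).deriv]
        have := mul_nonneg (mul_nonneg (mul_nonneg ht.le (hαnonneg x)) (hupos x).le)
          (hWpos x (by linarith [hx.2])).le
        linarith
      · rw [(hw x₀).deriv]
        have := mul_pos (mul_pos (mul_pos ht hαpos) (hupos x₀))
          (hWpos x₀ (by linarith [hx₀.2]))
        linarith
    rw [hw3] at hdrop; exact hdrop
  -- p(-3) = mf(-3)
  have hpm3 : p (-3:ℝ) = mf (-3:ℝ) := by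
    simp only [hpdef, hmdef]
    rw [h3, hd3]
  have hdropp : p (-2:ℝ) < p (-3:ℝ) := by
    apply strict_drop hx₀ hpdiff
    · intro x hx
      rw [(hp x).deriv]
      have hZx : 0 < Z x := by
        simp only [hZdef]
        exact hWpos (-x) (by linarith [hx.1])
      have := mul_nonneg (mul_nonneg (mul_nonneg ht.le (hαnonneg x)) (hupos x).le) hZx.le
      linarith
    · rw [(hp x₀).deriv]
      have hZx : 0 < Z x₀ := by
        simp only [hZdef]
        exact hWpos (-x₀) (by linarith [hx₀.1])
      have := mul_pos (mul_pos (mul_pos ht hαpos) (hupos x₀)) hZx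
      linarith
  have hM : 0 < p (-3:ℝ) := by rw [hp20] at hdropp; exact hdropp
  have hmf0 : mf 0 = p (-3:ℝ) := by rw [hpm3]; exact hmconst 0 (-3)
  have hW0 : 0 < W 0 := hWpos 0 (by norm_num)
  have hmf0' : mf 0 = -(2 * (W 0 * deriv W 0)) := by
    simp only [hmdef]
    rw [hZd]
    simp only [hZdef, neg_zero]
    ring
  have hdW0 : deriv W 0 < 0 := by
    have h1 : 0 < -(2 * (W 0 * deriv W 0)) := by rw [← hmf0', hmf0]; exact hM
    nlinarith
  -- D = W - Z
  set D : ℝ → ℝ := fun x => W x - Z x with hDdef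
  have hDd1 : ∀ x, HasDerivAt D (deriv W x - deriv Z x) x :=
    fun x => ((hWd x).hasDerivAt.sub ((hZdiff x).hasDerivAt))
  have hDderiv : deriv D = fun x => deriv W x - deriv Z x := funext fun x => (hDd1 x).deriv
  have hDd2 : ∀ x, HasDerivAt (deriv D) (deriv (deriv W) x - deriv (deriv Z) x) x := by
    intro x; rw [hDderiv]
    exact (hWd' x).hasDerivAt.sub ((hZdiff' x).hasDerivAt)
  have hDdiff : Differentiable ℝ D := fun x => (hDd1 x).differentiableAt
  have hDdiff' : Differentiable ℝ (deriv D) := fun x => (hDd2 x).differentiableAt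
  have hDeq : ∀ x, deriv (deriv D) x = (x ^ 2 - lam) * D x := by
    intro x
    rw [(hDd2 x).deriv, hWeq x, hZ'' x]
    simp only [hDdef]; ring
  have hD0 : D 0 = 0 := by simp only [hDdef, hZdef, neg_zero]; ring
  have hDd0 : deriv D 0 < 0 := by
    rw [hDderiv]
    simp only [hZd, neg_zero, neg_neg]
    linarith
  have hDlow : ∀ zz : ℝ, ∃ y, zz < y ∧ D y ≤ 0 := by
    intro zz
    have hz : Tendsto D atTop atBot := by
      have h1 : Tendsto (fun x => -Z x + W x) atTop atBot :=
        Filter.Tendsto.add_atBot hZlim.neg hWtop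
      exact h1.congr (fun x => by simp only [hDdef]; ring)
    obtain ⟨y, hy⟩ := ((hz.eventually (eventually_le_atBot 0)).and (eventually_gt_atTop zz)).exists
    exact ⟨y, hy.2, hy.1⟩
  -- the key sign fact : D < 0 on (0,∞)
  have hDneg : ∀ x : ℝ, 0 < x → D x < 0 := by
    intro x₁ hx₁
    by_contra hge
    push_neg at hge
    have hev : ∀ᶠ y in nhdsWithin 0 (Set.Ioi 0), D y < 0 :=
      eventually_neg_right (hDdiff 0) hD0 hDd0
    obtain ⟨δ₀, hδ₀, hsubδ⟩ := mem_nhdsGT_iff_exists_Ioc_subset.mp hev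
    set δ := min δ₀ (x₁ / 2) with hδdef
    have hδ₀pos : (0:ℝ) < δ₀ := hδ₀
    have hδpos : 0 < δ := lt_min hδ₀pos (by linarith)
    have hδlt : δ < x₁ := lt_of_le_of_lt (min_le_right _ _) (by linarith)
    have hδneg : ∀ y : ℝ, 0 < y → y ≤ δ → D y < 0 := fun y h1 h2 =>
      hsubδ ⟨h1, le_trans h2 (min_le_left _ _)⟩
    set A := Set.Icc δ x₁ ∩ {y : ℝ | D y = 0} with hAdef
    have hAne : A.Nonempty := by
      have hIVT := intermediate_value_Icc hδlt.le hDdiff.continuous.continuousOn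
      have h0mem : (0:ℝ) ∈ Set.Icc (D δ) (D x₁) := ⟨(hδneg δ hδpos le_rfl).le, hge⟩
      obtain ⟨y, hy1, hy2⟩ := hIVT h0mem
      exact ⟨y, hy1, hy2⟩
    have hAclosed : IsClosed A :=
      isClosed_Icc.inter (isClosed_eq hDdiff.continuous continuous_const)
    have hAbdd : BddBelow A := ⟨δ, fun y hy => hy.1.1⟩
    set z := sInf A with hzdef
    have hzA : z ∈ A := hAclosed.csInf_mem hAne hAbdd
    have hz0 : D z = 0 := hzA.2
    have hzpos : 0 < z := lt_of_lt_of_le hδpos hzA.1.1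
    have hzbefore : ∀ y : ℝ, 0 < y → y < z → D y < 0 := by
      intro y hy0 hyz
      rcases le_or_gt y δ with h | h
      · exact hδneg y hy0 h
      · by_contra hge2
        push_neg at hge2
        have hIVT := intermediate_value_Icc h.le hDdiff.continuous.continuousOn
        obtain ⟨v, hv1, hv2⟩ := hIVT ⟨(hδneg δ hδpos le_rfl).le, hge2⟩
        have hvA : v ∈ A := ⟨⟨hv1.1, le_trans hv1.2 (le_trans hyz.le hzA.1.2)⟩, hv2⟩
        have := csInf_le hAbdd hvA
        linarith [hv1.2]
    have hz' : 0 ≤ deriv D z := by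
      have hslope : Tendsto (slope D z) (nhdsWithin z (Set.Iio z)) (nhds (deriv D z)) :=
        (hasDerivAt_iff_tendsto_slope.mp (hDdiff z).hasDerivAt).mono_left
          (nhdsWithin_mono z (fun y hy => ne_of_lt hy))
      refine ge_of_tendsto hslope ?_
      filter_upwards [Ioo_mem_nhdsLT_of_mem (⟨hzpos, le_rfl⟩ : z ∈ Set.Ioc 0 z)] with y hy
      have h1 : D y < 0 := hzbefore y hy.1 hy.2
      have h2 : y - z < 0 := sub_neg.mpr hy.2
      rw [slope_def_field, hz0, sub_zero]
      exact le_of_lt (div_pos_iff.mpr (Or.inr ⟨by linarith, h2⟩))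
    rcases le_or_gt z (Real.sqrt 2) with hle | hgt
    · exact no_return_small hlam2 hDdiff hDdiff' hDeq hD0 hzpos hle
        (fun y hy => hzbefore y hy.1 hy.2) hz0 hz'
    · rcases lt_or_eq_of_le hz' with hzlt | hzeq
      · exact no_pos_crossing hlam2 hDdiff hDdiff' hDeq hgt hz0 hzlt (hDlow z)
      · have hvan := vanish_of_double_zero (show (0:ℝ) < lam by linarith)
          hDdiff hDdiff' hDeq hz0 hzeq.symm
        have hs2 : (1:ℝ) < Real.sqrt 2 := by
          nlinarith [Real.mul_self_sqrt (show (0:ℝ) ≤ 2 by norm_num), Real.sqrt_nonneg 2]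
        have hmem : z - 1/4 ∈ Set.Icc (z - 1/2) z := ⟨by linarith, by linarith⟩
        have h1 := hvan _ hmem
        have h2 := hzbefore (z - 1/4) (by linarith) (by linarith)
        linarith
  -- W - Z > 0 on (-3,-2)
  have hWZpos : ∀ x ∈ Set.Ioo (-3:ℝ) (-2), 0 < W x - Z x := by
    intro x hx
    have h1 := hDneg (-x) (by linarith [hx.2])
    simp only [hDdef, hZdef, neg_neg] at h1
    simp only [hZdef]
    linarith
  -- F = w - p drop
  have hFd : ∀ x, HasDerivAt (fun y => w y - p y)
      (-(t * α x * u x * W x) - -(t * α x * u x * Z x)) x := fun x => (hw x).sub (hp x)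
  have hFdiff : Differentiable ℝ (fun y => w y - p y) := fun x => (hFd x).differentiableAt
  have hdropF : w (-2:ℝ) - p (-2:ℝ) < w (-3:ℝ) - p (-3:ℝ) := by
    have := strict_drop hx₀ hFdiff (f := fun y => w y - p y) ?_ ?_
    · exact this
    · intro x hx
      rw [(hFd x).deriv]
      have h1 := hWZpos x hx
      have := mul_nonneg (mul_nonneg (mul_nonneg ht.le (hαnonneg x)) (hupos x).le) h1.le
      nlinarith
    · rw [(hFd x₀).deriv]
      have h1 := hWZpos x₀ hx₀
      have := mul_pos (mul_pos (mul_pos ht hαpos) (hupos x₀)) h1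
      nlinarith
  have hcM : w (-2:ℝ) < -(p (-3:ℝ)) := by
    rw [hp20, hw3] at hdropF
    linarith
  -- the proportionality constant k
  set k := Z 3 / u 3 with hkdef
  have hk_all : ∀ x : ℝ, -2 ≤ x → Z x = k * u x := by
    have hrd : ∀ x : ℝ, HasDerivAt (fun y => Z y / u y)
        ((deriv Z x * u x - Z x * deriv u x) / (u x) ^ 2) x := fun x =>
      (hZdiff x).hasDerivAt.div (hud x).hasDerivAt (ne_of_gt (hupos x))
    have hrconst : ∀ x : ℝ, -2 ≤ x → Z x / u x = Z (-2) / u (-2) := by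
      apply eq_on_Ici_of_deriv_zero (f := fun y => Z y / u y)
        (fun x => (hrd x).differentiableAt)
      intro x hx
      rw [(hrd x).deriv]
      have hpx : p x = 0 := by rw [hpconst x hx, hp20]
      have hnum : deriv Z x * u x - Z x * deriv u x = p x := by simp only [hpdef]; ring
      rw [hnum, hpx]; simp
    intro x hx
    have h1 := hrconst x hx
    have h2 := hrconst 3 (by norm_num)
    have h4 : Z x / u x = k := by rw [hkdef, h2]; exact h1
    have hux : u x ≠ 0 := ne_of_gt (hupos x)
    exact (div_eq_iff hux).mp h4
  have hZd3 : deriv Z 3 = k * deriv u 3 := by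
    have hev : Z =ᶠ[nhds (3:ℝ)] fun y => k * u y := by
      apply Filter.eventuallyEq_of_mem (Ioi_mem_nhds (show (-2:ℝ) < 3 by norm_num))
      intro y hy
      exact hk_all y (le_of_lt hy)
    rw [hev.deriv_eq, deriv_const_mul _ (hud 3)]
  have hMk : p (-3:ℝ) = -(k * w (-2:ℝ)) := by
    have e1 : mf 3 = p (-3:ℝ) := (hmconst 3 (-3)).trans hpm3.symm
    have e3 : Z 3 = k * u 3 := hk_all 3 (by norm_num)
    have e4 : w 3 = w (-2:ℝ) := hwconst 3 (by norm_num)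
    rw [← e1, ← e4]
    simp only [hmdef, hwdef]
    rw [hZd3, e3]
    ring
  have hk_pos : 0 < k := by nlinarith
  have hk_lt1 : k < 1 := by nlinarith
  -- Part 1
  have part1 : ∀ x ≥ (3:ℝ), (u (-x)) ^ 2 < (u x) ^ 2 := by
    intro x hx
    have h0 : W (-x) = u (-x) := hWu _ (by linarith)
    have h1 : Z x = k * u x := hk_all x (by linarith)
    have h2 : u (-x) = k * u x := by
      rw [← h0]
      simpa only [hZdef] using h1
    rw [h2]
    have h5 : 0 < u x := hupos x
    have h6 : 0 < (1 - k) * (1 + k) := mul_pos (by linarith) (by linarith)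
    nlinarith [mul_pos h5 h5, mul_pos h6 (mul_pos h5 h5)]
  refine ⟨part1, ?_⟩
  intro h
  have h1 := h (7/2) (Set.mem_union_right _ (by constructor <;> norm_num))
  have h2 := part1 (7/2) (by norm_num)
  rw [h1] at h2
  exact lt_irrefl _ h2
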